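/- Let A be an abelian category and B a full subcategory closed under extensions and under kernels of epimorphisms. If (X, Y) is a complete hereditary cotorsion pair in A with X ⊆ B, then (X, Y ∩ B) is a hereditary cotorsion pair in the exact category B. -/

import Mathlib

universe u

open CategoryTheory Limits

/-- `Ext¹(X, Y) = 0` in an abelian category, expressed via the splitting of every
short exact sequence `0 → Y → E → X → 0`. -/
def Ext1Z {A : Type u} [Category.{u} A] [Abelian A] (X Y : A) : Prop :=
  ∀ (E : A) (i : Y ⟶ E) (p : E ⟶ X) (w : i ≫ p = 0),
    (ShortComplex.mk i p w).ShortExact → ∃ s : X ⟶ E, s ≫ p = 𝟙 X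

/-- A complete cotorsion pair `(X, Y)` in an abelian category. -/
def IsCompleteCotorsionPair {A : Type u} [Category.{u} A] [Abelian A]
    (X Y : Set A) : Prop :=
  (∀ M, M ∈ Y ↔ ∀ C ∈ X, Ext1Z C M) ∧
  (∀ M, M ∈ X ↔ ∀ F ∈ Y, Ext1Z M F) ∧
  (∀ M : A, ∃ (F C : A) (i : F ⟶ C) (p : C ⟶ M) (w : i ≫ p = 0),
      (ShortComplex.mk i p w).ShortExact ∧ F ∈ Y ∧ C ∈ X) ∧
  (∀ M : A, ∃ (F C : A) (i : M ⟶ F) (p : F ⟶ C) (w : i ≫ p = 0),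
      (ShortComplex.mk i p w).ShortExact ∧ F ∈ Y ∧ C ∈ X)

/-- A complete cotorsion pair `(X, Y)` in the exact category given by an
extension-closed full subcategory `B` of an abelian category, where the admissible
exact sequences of `B` are the short exact sequences of the ambient abelian category
with all three terms in `B`. -/
def IsCompleteCotorsionPairIn {A : Type u} [Category.{u} A] [Abelian A]
    (B X Y : Set A) : Prop :=
  X ⊆ B ∧ Y ⊆ B ∧
  (∀ M ∈ B, (M ∈ Y ↔ ∀ C ∈ X, Ext1Z C M)) ∧
  (∀ M ∈ B, (M ∈ X ↔ ∀ F ∈ Y, Ext1Z M F)) ∧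
  (∀ M ∈ B, ∃ (F C : A) (i : F ⟶ C) (p : C ⟶ M) (w : i ≫ p = 0),
      (ShortComplex.mk i p w).ShortExact ∧ F ∈ Y ∧ C ∈ X) ∧
  (∀ M ∈ B, ∃ (F C : A) (i : M ⟶ F) (p : F ⟶ C) (w : i ≫ p = 0),
      (ShortComplex.mk i p w).ShortExact ∧ F ∈ Y ∧ C ∈ X)

/-- A cotorsion pair `(X, Y)` (orthogonality only) in the exact category given by an
extension-closed full subcategory `B` of an abelian category. -/
def IsCotorsionPairIn {A : Type u} [Category.{u} A] [Abelian A]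
    (B X Y : Set A) : Prop :=
  X ⊆ B ∧ Y ⊆ B ∧
  (∀ M ∈ B, (M ∈ Y ↔ ∀ C ∈ X, Ext1Z C M)) ∧
  (∀ M ∈ B, (M ∈ X ↔ ∀ F ∈ Y, Ext1Z M F))


lemma pullback_shortExact {A : Type u} [Category.{u} A] [Abelian A]
    {F E M C : A} (i : F ⟶ E) (q : E ⟶ M) (w : i ≫ q = 0)
    (hS : (ShortComplex.mk i q w).ShortExact) (p : C ⟶ M) :
    (ShortComplex.mk (pullback.lift i 0 (by simp [w]) : F ⟶ pullback q p)
      (pullback.snd q p) (pullback.lift_snd _ _ _)).ShortExact := by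
  have w' : i ≫ q = 0 ≫ p := by rw [w, zero_comp]
  haveI := hS.epi_g
  haveI := hS.mono_f
  haveI : Epi (pullback.snd q p) := Abelian.epi_pullback_of_epi_f q p
  haveI : Mono (pullback.lift i 0 (by simp [w]) : F ⟶ pullback q p) := by
    have : (pullback.lift i 0 (by simp [w]) : F ⟶ pullback q p) ≫ pullback.fst q p = i := pullback.lift_fst _ _ _
    exact mono_of_mono_fac this
  refine ⟨?_⟩
  apply ShortComplex.exact_of_f_is_kernel
  apply KernelFork.IsLimit.ofι
  case lift =>
    intro K k hk
    exact hS.exact.lift (k ≫ pullback.fst q p)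
      (by rw [Category.assoc, pullback.condition, ← Category.assoc] at *; rw [hk, zero_comp])
  case fac =>
    intro K k hk
    apply pullback.hom_ext
    · rw [Category.assoc, pullback.lift_fst]; exact hS.exact.lift_f (k ≫ pullback.fst q p) _
    · rw [Category.assoc, pullback.lift_snd, comp_zero]; exact hk.symm
  case uniq =>
    intro K k hk m hm
    apply Mono.right_cancellation (f := pullback.lift i 0 w')
    rw [hm]
    apply pullback.hom_ext
    · rw [Category.assoc, pullback.lift_fst]; exact (hS.exact.lift_f (k ≫ pullback.fst q p) _).symm
    · rw [Category.assoc, pullback.lift_snd, comp_zero]; exact hk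

lemma ext1Z_of_retract {A : Type u} [Category.{u} A] [Abelian A]
    {M C F : A} (s : M ⟶ C) (p : C ⟶ M) (hs : s ≫ p = 𝟙 M)
    (h : Ext1Z C F) : Ext1Z M F := by
  intro E i q w hSE
  obtain ⟨t, ht⟩ := h (pullback q p) (pullback.lift i 0 (by simp [w])) (pullback.snd q p)
    (pullback.lift_snd _ _ _) (pullback_shortExact i q w hSE p)
  refine ⟨s ≫ t ≫ pullback.fst q p, ?_⟩
  rw [Category.assoc, Category.assoc, pullback.condition, ← Category.assoc t, ht,
    Category.id_comp, hs]

/-- If `B` is a full subcategory of an abelian category closed under extensions and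
kernels of epimorphisms, and `(X, Y)` is a complete hereditary cotorsion pair with
`X ⊆ B`, then `(X, Y ∩ B)` is a hereditary cotorsion pair in the exact category `B`
(heredity: the left class is closed under kernels of deflations). -/
theorem induced_hereditary_cotorsion_pair {A : Type u} [Category.{u} A] [Abelian A]
    (B X Y : Set A)
    (hext : ∀ S : ShortComplex A, S.ShortExact → S.X₁ ∈ B → S.X₃ ∈ B → S.X₂ ∈ B)
    (hker : ∀ S : ShortComplex A, S.ShortExact → S.X₂ ∈ B → S.X₃ ∈ B → S.X₁ ∈ B)
    (hXY : IsCompleteCotorsionPair X Y)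
    (hHer : ∀ S : ShortComplex A, S.ShortExact → S.X₂ ∈ X → S.X₃ ∈ X → S.X₁ ∈ X)
    (hXB : X ⊆ B) :
    IsCotorsionPairIn B X (Y ∩ B) ∧
    (∀ S : ShortComplex A, S.ShortExact → S.X₁ ∈ B → S.X₂ ∈ B → S.X₃ ∈ B →
      S.X₂ ∈ X → S.X₃ ∈ X → S.X₁ ∈ X) := by
  obtain ⟨hY, hX, happ, _⟩ := hXY
  constructor
  · refine ⟨hXB, fun M hM => hM.2, fun M hM => ?_, fun M hM => ?_⟩
    · constructor
      · intro hMY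
        exact (hY M).mp hMY.1
      · intro h
        exact ⟨(hY M).mpr h, hM⟩
    · constructor
      · intro hMX F hF
        exact (hX M).mp hMX F hF.1
      · intro h
        obtain ⟨F, C, i, p, w, hSE, hFY, hCX⟩ := happ M
        have hFB : F ∈ B := hker (ShortComplex.mk i p w) hSE (hXB hCX) hM
        obtain ⟨s, hs⟩ := h F ⟨hFY, hFB⟩ C i p w hSE
        refine (hX M).mpr (fun F' hF' => ?_)
        exact ext1Z_of_retract s p hs ((hX C).mp hCX F' hF')
  · intro S hSE _ _ _ h2 h3
    exact hHer S hSE h2 h3
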